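/- Let K be a number field with ring of integers O_K and let S be a finite subset of O_K. Then S is n-universal if and only if for every non-zero prime ideal 𝔭 of O_K there exists a subset S' of S with n+1 elements which is almost uniformly distributed modulo 𝔭^k for every positive integer k. -/

import Mathlib

open scoped Classical
open NumberField

/-- A finite subset `S` of an integral domain `A` with field of fractions `K` is
`n`-universal if for every polynomial `P ∈ K[X]` of degree at most `n`, `P` maps `A`
into `A` if and only if `P` maps `S` into `A`. -/
def IsNUniversal (A K : Type*) [CommRing A] [IsDomain A] [Field K] [Algebra A K]
    [IsFractionRing A K] (n : ℕ) (S : Finset A) : Prop :=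
  ∀ P : Polynomial K, P.natDegree ≤ n →
    ((∀ a : A, ∃ b : A, Polynomial.eval (algebraMap A K a) P = algebraMap A K b) ↔
      ∀ s ∈ S, ∃ b : A, Polynomial.eval (algebraMap A K s) P = algebraMap A K b)

/-- A finite subset `T` of a commutative ring `B` is almost uniformly distributed
modulo an ideal `I` if for all `a, b ∈ B` the difference of the numbers of elements
of `T` congruent to `a` resp. `b` modulo `I` lies in `{-1, 0, 1}`. -/
def IsAUD {B : Type*} [CommRing B] (I : Ideal B) (T : Finset B) : Prop :=
  ∀ a b : B,
    ((T.filter fun t => t - a ∈ I).card : ℤ) - ((T.filter fun t => t - b ∈ I).card : ℤ) ∈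
      ({-1, 0, 1} : Set ℤ)

set_option linter.unusedSectionVars false

section
variable {K : Type*} [Field K] [NumberField K]

def IsNu (𝔭 : Ideal (𝓞 K)) (z : 𝓞 K) (m : ℕ) : Prop := ∀ k, z ∈ 𝔭 ^ k ↔ k ≤ m

/-- number of elements of `T` congruent to `a` mod `𝔭^k`. -/
noncomputable def cnt (𝔭 : Ideal (𝓞 K)) (k : ℕ) (T : Finset (𝓞 K)) (a : 𝓞 K) : ℕ :=
  (T.filter fun t => t - a ∈ 𝔭 ^ k).card

variable {𝔭 : Ideal (𝓞 K)} (hp : 𝔭.IsPrime) (hp0 : 𝔭 ≠ ⊥)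

lemma isAUD_iff {I : Ideal (𝓞 K)} {T : Finset (𝓞 K)} :
    IsAUD I T ↔ ∀ a b : 𝓞 K,
      (T.filter fun t => t - a ∈ I).card ≤ (T.filter fun t => t - b ∈ I).card + 1 := by
  constructor
  · intro h a b
    have := h a b
    simp only [Set.mem_insert_iff, Set.mem_singleton_iff] at this
    omega
  · intro h a b
    have h1 := h a b
    have h2 := h b a
    simp only [Set.mem_insert_iff, Set.mem_singleton_iff]
    omega

lemma cnt_congr {k : ℕ} {T : Finset (𝓞 K)} {a b : 𝓞 K} (h : a - b ∈ 𝔭 ^ k) :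
    cnt 𝔭 k T a = cnt 𝔭 k T b := by
  unfold cnt
  congr 1
  apply Finset.filter_congr
  intro t _
  constructor
  · intro ht
    have := add_mem ht h
    simpa [sub_add_sub_cancel] using this
  · intro ht
    have := add_mem ht (neg_mem h)
    have h2 : t - b + -(a - b) = t - a := by ring
    rwa [h2] at this

lemma cnt_anti {k k' : ℕ} (hk : k ≤ k') {T : Finset (𝓞 K)} {a : 𝓞 K} :
    cnt 𝔭 k' T a ≤ cnt 𝔭 k T a := by
  apply Finset.card_le_card
  intro t ht
  simp only [Finset.mem_filter] at ht ⊢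
  exact ⟨ht.1, Ideal.pow_le_pow_right hk ht.2⟩

lemma cnt_zero_level {T : Finset (𝓞 K)} {a : 𝓞 K} : cnt 𝔭 0 T a = T.card := by
  unfold cnt
  rw [Finset.filter_true_of_mem]
  intro t _
  simp [Ideal.one_eq_top]

lemma nu_eq_card_filter {z : 𝓞 K} {m M : ℕ} (h : IsNu 𝔭 z m) (hM : m ≤ M) :
    ((Finset.Icc 1 M).filter fun k => z ∈ 𝔭 ^ k).card = m := by
  have : (Finset.Icc 1 M).filter (fun k => z ∈ 𝔭 ^ k) = Finset.Icc 1 m := by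
    ext k
    simp only [Finset.mem_filter, Finset.mem_Icc]
    constructor
    · rintro ⟨⟨h1, h2⟩, h3⟩
      exact ⟨h1, (h k).1 h3⟩
    · rintro ⟨h1, h2⟩
      exact ⟨⟨h1, le_trans h2 hM⟩, (h k).2 h2⟩
  rw [this, Nat.card_Icc]
  omega

/-- The fundamental counting identity. -/
lemma sum_nu_eq {T : Finset (𝓞 K)} {a : 𝓞 K} {m : 𝓞 K → ℕ} {M : ℕ}
    (h : ∀ t ∈ T, IsNu 𝔭 (t - a) (m t)) (hM : ∀ t ∈ T, m t ≤ M) :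
    ∑ t ∈ T, m t = ∑ k ∈ Finset.Icc 1 M, cnt 𝔭 k T a := by
  have h1 : ∀ t ∈ T, m t = ∑ k ∈ Finset.Icc 1 M, (if t - a ∈ 𝔭 ^ k then 1 else 0) := by
    intro t ht
    rw [← nu_eq_card_filter (h t ht) (hM t ht), Finset.card_filter]
  rw [Finset.sum_congr rfl h1, Finset.sum_comm]
  apply Finset.sum_congr rfl
  intro k _
  rw [cnt, Finset.card_filter]

lemma cnt_insert {k : ℕ} {T : Finset (𝓞 K)} {x a : 𝓞 K} (hx : x ∉ T) :
    cnt 𝔭 k (insert x T) a = cnt 𝔭 k T a + if x - a ∈ 𝔭 ^ k then 1 else 0 := by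
  unfold cnt
  rw [Finset.filter_insert]
  split_ifs with h
  · rw [Finset.card_insert_of_notMem (fun hmem => hx (Finset.mem_of_mem_filter _ hmem))]
  · omega

lemma cnt_erase {k : ℕ} {T : Finset (𝓞 K)} {s a : 𝓞 K} (hs : s ∈ T) :
    cnt 𝔭 k (T.erase s) a = cnt 𝔭 k T a - if s - a ∈ 𝔭 ^ k then 1 else 0 := by
  unfold cnt
  rw [Finset.filter_erase]
  split_ifs with h
  · rw [Finset.card_erase_of_mem
      (show s ∈ T.filter (fun t => t - a ∈ 𝔭 ^ k) from Finset.mem_filter.2 ⟨hs, h⟩)]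
  · rw [Finset.erase_eq_of_notMem
      (show s ∉ T.filter (fun t => t - a ∈ 𝔭 ^ k) from
        fun hmem => h (Finset.mem_filter.1 hmem).2)]
    omega

lemma cnt_pos_of_mem {k : ℕ} {T : Finset (𝓞 K)} {s : 𝓞 K} (hs : s ∈ T) :
    1 ≤ cnt 𝔭 k T s := by
  apply Finset.card_pos.2
  exact ⟨s, Finset.mem_filter.2 ⟨hs, by simp⟩⟩

/-- Key inequality: if T is AUD mod all powers of 𝔭, then for `s ∈ T`, `a ∉ T`,
the valuation of `∏_{t ∈ T.erase s} (t - a)` is at least that of `∏ (t - s)`. -/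
lemma key_ineq {T : Finset (𝓞 K)} (hAUD : ∀ k : ℕ, 0 < k → IsAUD (𝔭 ^ k) T)
    {s : 𝓞 K} (hs : s ∈ T) {a : 𝓞 K}
    {mA mS : 𝓞 K → ℕ}
    (hmA : ∀ t ∈ T.erase s, IsNu 𝔭 (t - a) (mA t))
    (hmS : ∀ t ∈ T.erase s, IsNu 𝔭 (t - s) (mS t)) :
    ∑ t ∈ T.erase s, mS t ≤ ∑ t ∈ T.erase s, mA t := by
  classical
  set M : ℕ := (T.erase s).sup (fun t => max (mA t) (mS t)) with hM
  have hMA : ∀ t ∈ T.erase s, mA t ≤ M := fun t ht =>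
    le_trans (le_max_left _ _) (Finset.le_sup (f := fun t => max (mA t) (mS t)) ht)
  have hMS : ∀ t ∈ T.erase s, mS t ≤ M := fun t ht =>
    le_trans (le_max_right _ _) (Finset.le_sup (f := fun t => max (mA t) (mS t)) ht)
  rw [sum_nu_eq hmA hMA, sum_nu_eq hmS hMS]
  apply Finset.sum_le_sum
  intro k hk
  have hk1 : 0 < k := (Finset.mem_Icc.1 hk).1
  -- cnt over erase
  rw [cnt_erase hs, cnt_erase hs]
  have haud := (isAUD_iff.1 (hAUD k hk1))
  by_cases hsa : s - a ∈ 𝔭 ^ k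
  · rw [if_pos hsa, if_pos (by simp : s - s ∈ 𝔭 ^ k)]
    have hc : cnt 𝔭 k T s = cnt 𝔭 k T a := cnt_congr hsa
    omega
  · rw [if_neg hsa, if_pos (by simp : s - s ∈ 𝔭 ^ k)]
    have := haud s a
    have h1 := cnt_pos_of_mem (𝔭 := 𝔭) (k := k) hs
    change cnt 𝔭 k T s ≤ cnt 𝔭 k T a + 1 at this
    omega

include hp hp0 in
lemma exists_isNu {z : 𝓞 K} (hz : z ≠ 0) : ∃ m, IsNu 𝔭 z m := by
  have hbd : ∃ k, z ∉ 𝔭 ^ k := by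
    by_contra h
    push_neg at h
    have h2 : z ∈ (⨅ k : ℕ, 𝔭 ^ k) := by
      simp only [Ideal.mem_iInf]; exact h
    have hbot : (⨅ i : ℕ, 𝔭 ^ i) = ⊥ := Ideal.iInf_pow_eq_bot_of_isDomain (I := 𝔭) hp.ne_top
    rw [hbot] at h2
    exact hz h2
  classical
  let k0 := Nat.find hbd
  have hk0 : z ∉ 𝔭 ^ k0 := Nat.find_spec hbd
  have hk0pos : 0 < k0 := by
    rcases Nat.eq_zero_or_pos k0 with h | h
    · exfalso; apply hk0; rw [h, pow_zero, Ideal.one_eq_top]; trivial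
    · exact h
  refine ⟨k0 - 1, fun k => ⟨fun hk => ?_, fun hk => ?_⟩⟩
  · by_contra hlt
    push_neg at hlt
    have : k0 ≤ k := by omega
    exact hk0 (Ideal.pow_le_pow_right this hk)
  · have : k < k0 := by omega
    exact not_not.mp (Nat.find_min hbd this)

lemma IsNu.mem {z : 𝓞 K} {m : ℕ} (h : IsNu 𝔭 z m) : z ∈ 𝔭 ^ m := (h m).2 le_rfl

lemma IsNu.not_mem {z : 𝓞 K} {m : ℕ} (h : IsNu 𝔭 z m) : z ∉ 𝔭 ^ (m + 1) := by
  intro hz; exact absurd ((h (m+1)).1 hz) (by omega)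

lemma isNu_of_mem_not_mem {z : 𝓞 K} {m : ℕ} (h1 : z ∈ 𝔭 ^ m) (h2 : z ∉ 𝔭 ^ (m + 1)) :
    IsNu 𝔭 z m := by
  intro k
  constructor
  · intro hk
    by_contra hle
    push_neg at hle
    exact h2 (Ideal.pow_le_pow_right (by omega) hk)
  · intro hk
    exact Ideal.pow_le_pow_right hk h1

lemma IsNu.ne_zero {z : 𝓞 K} {m : ℕ} (h : IsNu 𝔭 z m) : z ≠ 0 := by
  rintro rfl; exact h.not_mem (zero_mem _)

lemma IsNu.unique {z : 𝓞 K} {m m' : ℕ} (h : IsNu 𝔭 z m) (h' : IsNu 𝔭 z m') : m = m' := by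
  have := (h' m).1 (h.mem)
  have := (h m').1 (h'.mem)
  omega

include hp hp0 in
lemma IsNu.mul {y z : 𝓞 K} {a b : ℕ} (hy : IsNu 𝔭 y a) (hz : IsNu 𝔭 z b) :
    IsNu 𝔭 (y * z) (a + b) := by
  have hprime : Prime 𝔭 := Ideal.prime_of_isPrime hp0 hp
  refine isNu_of_mem_not_mem ?_ ?_
  · have := Ideal.mul_mem_mul hy.mem hz.mem
    rwa [← pow_add] at this
  · intro hmem
    -- pass to ideals
    have hdvd : 𝔭 ^ (a + b + 1) ∣ Ideal.span {y} * Ideal.span {z} := by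
      rw [Ideal.span_singleton_mul_span_singleton]
      exact Ideal.dvd_span_singleton.2 hmem
    obtain ⟨A, hA⟩ : 𝔭 ^ a ∣ Ideal.span {y} := Ideal.dvd_span_singleton.2 hy.mem
    obtain ⟨B, hB⟩ : 𝔭 ^ b ∣ Ideal.span {z} := Ideal.dvd_span_singleton.2 hz.mem
    have hpA : ¬ 𝔭 ∣ A := by
      intro ⟨C, hC⟩
      apply hy.not_mem
      rw [← Ideal.dvd_span_singleton, hA, hC, pow_succ]
      exact Dvd.intro C (by ring)
    have hpB : ¬ 𝔭 ∣ B := by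
      intro ⟨C, hC⟩
      apply hz.not_mem
      rw [← Ideal.dvd_span_singleton, hB, hC, pow_succ]
      exact Dvd.intro C (by ring)
    rw [hA, hB] at hdvd
    have hne : 𝔭 ^ (a + b) ≠ 0 := pow_ne_zero _ hprime.ne_zero
    have h2 : 𝔭 ∣ A * B := by
      have : 𝔭 ^ (a + b) * (𝔭 * (A * B)) = 𝔭 ^ (a + b) * ((A * B) * 𝔭) := by ring
      obtain ⟨C, hC⟩ := hdvd
      refine ⟨C, mul_left_cancel₀ hne ?_⟩
      calc 𝔭 ^ (a+b) * (A*B) = 𝔭 ^ a * A * (𝔭 ^ b * B) := by ring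
        _ = 𝔭 ^ (a+b+1) * C := hC
        _ = 𝔭 ^ (a+b) * (𝔭 * C) := by ring
    rcases hprime.2.2 _ _ h2 with h | h
    · exact hpA h
    · exact hpB h

include hp hp0 in
lemma IsNu.prod {ι : Type*} (T : Finset ι) (f : ι → 𝓞 K) (m : ι → ℕ)
    (h : ∀ t ∈ T, IsNu 𝔭 (f t) (m t)) :
    IsNu 𝔭 (∏ t ∈ T, f t) (∑ t ∈ T, m t) := by
  classical
  induction T using Finset.induction_on with
  | empty =>
    simp only [Finset.prod_empty, Finset.sum_empty]
    refine isNu_of_mem_not_mem (by simp) ?_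
    rw [pow_one]
    intro h1
    exact hp.ne_top (Ideal.eq_top_of_isUnit_mem _ h1 isUnit_one)
  | @insert a s hnotmem ih =>
    rw [Finset.prod_insert hnotmem, Finset.sum_insert hnotmem]
    exact (h a (Finset.mem_insert_self a s)).mul hp hp0
      (ih fun t ht => h t (Finset.mem_insert_of_mem ht))

include hp hp0 in
/-- The `u`,`w` trick: divisibility test for membership in `𝔭 ^ c`. -/
lemma exists_uw (c : ℕ) :
    ∃ u w : 𝓞 K, u ≠ 0 ∧ w ≠ 0 ∧ ∀ z : 𝓞 K, (u ∣ w * z ↔ z ∈ 𝔭 ^ c) := by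
  have hprime : Prime 𝔭 := Ideal.prime_of_isPrime hp0 hp
  obtain ⟨u, hu1, hu2⟩ := Ideal.exists_mem_pow_notMem_pow_succ 𝔭 hp0 hp.ne_top c
  obtain ⟨B, hB⟩ : 𝔭 ^ c ∣ Ideal.span {u} := Ideal.dvd_span_singleton.2 hu1
  have hpB : ¬ 𝔭 ∣ B := by
    intro ⟨C, hC⟩
    apply hu2
    rw [← Ideal.dvd_span_singleton, hB, hC, pow_succ]
    exact Dvd.intro C (by ring)
  have hBp : ¬ B ≤ 𝔭 := fun h => hpB (Ideal.dvd_iff_le.2 h)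
  obtain ⟨w, hwB, hwp⟩ := SetLike.not_le_iff_exists.1 hBp
  have hu0 : u ≠ 0 := fun h => hu2 (h ▸ zero_mem _)
  have hw0 : w ≠ 0 := fun h => hwp (h ▸ zero_mem _)
  refine ⟨u, w, hu0, hw0, fun z => ?_⟩
  constructor
  · intro hdvd
    have h1 : Ideal.span {u} ∣ Ideal.span {w} * Ideal.span {z} := by
      rw [Ideal.span_singleton_mul_span_singleton]
      exact Ideal.dvd_span_singleton.2 (Ideal.mem_span_singleton.2 hdvd)
    rw [hB] at h1
    have h2 : 𝔭 ^ c ∣ Ideal.span {w} * Ideal.span {z} := dvd_trans ⟨B, rfl⟩ h1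
    have h3 : ¬ 𝔭 ∣ Ideal.span {w} := fun h => hwp (Ideal.dvd_span_singleton.1 h)
    have h4 : 𝔭 ^ c ∣ Ideal.span {z} := hprime.pow_dvd_of_dvd_mul_left c h3 h2
    exact Ideal.dvd_span_singleton.1 h4
  · intro hz
    have h1 : 𝔭 ^ c ∣ Ideal.span {z} := Ideal.dvd_span_singleton.2 hz
    have h2 : B ∣ Ideal.span {w} := Ideal.dvd_iff_le.2 (Ideal.span_le.2 (by simpa using hwB))
    have h3 : Ideal.span {u} ∣ Ideal.span {w} * Ideal.span {z} := by
      rw [hB, mul_comm (𝔭 ^ c) B]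
      exact mul_dvd_mul h2 h1
    rw [Ideal.span_singleton_mul_span_singleton] at h3
    exact Ideal.mem_span_singleton.1 (Ideal.dvd_span_singleton.1 h3)

include hp hp0 in
/-- Subclass descent: a minimal class at level `k` contains a minimal class at level `k+1`. -/
lemma exists_min_subclass (k : ℕ) (T : Finset (𝓞 K))
    (hAUD : IsAUD (𝔭 ^ (k + 1)) T) (a₀ : 𝓞 K) (hmin : ∀ b, cnt 𝔭 k T a₀ ≤ cnt 𝔭 k T b) :
    ∃ a : 𝓞 K, a - a₀ ∈ 𝔭 ^ k ∧ ∀ b, cnt 𝔭 (k + 1) T a ≤ cnt 𝔭 (k + 1) T b := by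
  classical
  -- minimal value at level k+1
  have hne : {m | ∃ a, cnt 𝔭 (k+1) T a = m}.Nonempty := ⟨cnt 𝔭 (k+1) T 0, 0, rfl⟩
  obtain ⟨astar, hastar⟩ := Nat.sInf_mem hne
  set q1 := cnt 𝔭 (k+1) T astar with hq1
  have hq1min : ∀ b, q1 ≤ cnt 𝔭 (k+1) T b := by
    intro b
    rw [hastar]
    exact Nat.sInf_le ⟨b, rfl⟩
  by_contra hcon
  push_neg at hcon
  have hcon' : ∀ a : 𝓞 K, a - a₀ ∈ 𝔭 ^ k → q1 + 1 ≤ cnt 𝔭 (k+1) T a := by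
    intro a ha
    obtain ⟨b, hb⟩ := hcon a ha
    have := hq1min b
    omega
  -- set of representatives of classes of 𝔭^k modulo 𝔭^(k+1)
  have hpk1 : (𝔭 ^ (k+1) : Ideal (𝓞 K)) ≠ ⊥ := pow_ne_zero _ hp0
  letI : Fintype ((𝓞 K) ⧸ 𝔭 ^ (k+1)) := by
    haveI := Ideal.finiteQuotientOfFreeOfNeBot _ hpk1; exact Fintype.ofFinite _
  set mk : 𝓞 K →+* (𝓞 K) ⧸ 𝔭 ^ (k+1) := Ideal.Quotient.mk (𝔭 ^ (k+1)) with hmk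
  set rep : ((𝓞 K) ⧸ 𝔭 ^ (k+1)) → 𝓞 K := fun x =>
    if h : ∃ v, v ∈ 𝔭 ^ k ∧ mk v = x then h.choose else 0 with hrep
  have hrep1 : ∀ x, (∃ v, v ∈ 𝔭 ^ k ∧ mk v = x) → rep x ∈ 𝔭 ^ k ∧ mk (rep x) = x := by
    intro x hx
    rw [hrep]
    simp only [dif_pos hx]
    exact hx.choose_spec
  set V : Finset (𝓞 K) :=
    (Finset.univ.filter (fun x : ((𝓞 K) ⧸ 𝔭 ^ (k+1)) => ∃ v, v ∈ 𝔭 ^ k ∧ mk v = x)).image rep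
    with hV
  have hVmem : ∀ v ∈ V, v ∈ 𝔭 ^ k ∧ (∃ x, (∃ w, w ∈ 𝔭 ^ k ∧ mk w = x) ∧ rep x = v ∧ mk v = x) := by
    intro v hv
    rw [hV] at hv
    obtain ⟨x, hx, rfl⟩ := Finset.mem_image.1 hv
    rw [Finset.mem_filter] at hx
    obtain ⟨h1, h2⟩ := (hrep1 x hx.2)
    exact ⟨h1, x, hx.2, rfl, h2⟩
  -- V represents each element of 𝔭^k mod 𝔭^(k+1)
  have hVcover : ∀ z ∈ (𝔭 ^ k : Ideal (𝓞 K)), ∃ v ∈ V, z - v ∈ 𝔭 ^ (k+1) := by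
    intro z hz
    refine ⟨rep (mk z), ?_, ?_⟩
    · rw [hV]
      apply Finset.mem_image_of_mem
      rw [Finset.mem_filter]
      exact ⟨Finset.mem_univ _, z, hz, rfl⟩
    · have := (hrep1 (mk z) ⟨z, hz, rfl⟩).2
      rwa [← Ideal.Quotient.eq, eq_comm]
  have hVinj : ∀ v ∈ V, ∀ v' ∈ V, v - v' ∈ 𝔭 ^ (k+1) → v = v' := by
    intro v hv v' hv' hvv
    obtain ⟨-, x, -, hx2, hx3⟩ := hVmem v hv
    obtain ⟨-, x', -, hx2', hx3'⟩ := hVmem v' hv'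
    have : mk v = mk v' := Ideal.Quotient.eq.2 hvv
    rw [hx3, hx3'] at this
    rw [← hx2, ← hx2', this]
  -- the partition identity
  have hpart : ∀ b : 𝓞 K, cnt 𝔭 k T b = ∑ v ∈ V, cnt 𝔭 (k+1) T (b + v) := by
    intro b
    set f : 𝓞 K → 𝓞 K := fun t => rep (mk (t - b)) with hf
    have hmem : ∀ t ∈ T.filter (fun t => t - b ∈ 𝔭 ^ k), f t ∈ V := by
      intro t ht
      have htb := (Finset.mem_filter.1 ht).2
      rw [hV, hf]
      apply Finset.mem_image_of_mem
      rw [Finset.mem_filter]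
      exact ⟨Finset.mem_univ _, t - b, htb, rfl⟩
    rw [cnt, Finset.card_eq_sum_card_fiberwise hmem]
    apply Finset.sum_congr rfl
    intro v hv
    rw [cnt]
    congr 1
    ext t
    simp only [Finset.mem_filter, and_assoc]
    constructor
    · rintro ⟨ht, htb, hft⟩
      refine ⟨ht, ?_⟩
      have h1 := (hrep1 (mk (t - b)) ⟨t - b, htb, rfl⟩).2
      have hft' : rep (mk (t - b)) = v := hft
      rw [hft'] at h1
      have h2 : t - b - v ∈ 𝔭 ^ (k+1) := Ideal.Quotient.eq.1 h1.symm
      have h3 : t - b - v = t - (b + v) := by ring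
      rwa [h3] at h2
    · rintro ⟨ht, htv⟩
      have hvk := (hVmem v hv).1
      have htb : t - b ∈ 𝔭 ^ k := by
        have h3 : t - b = (t - (b + v)) + v := by ring
        rw [h3]
        exact add_mem (Ideal.pow_le_pow_right (by omega) htv) hvk
      refine ⟨ht, htb, ?_⟩
      -- f t = v
      have hfV : f t ∈ V := by
        rw [hV, hf]
        apply Finset.mem_image_of_mem
        rw [Finset.mem_filter]
        exact ⟨Finset.mem_univ _, t - b, htb, rfl⟩
      apply hVinj _ hfV _ hv
      have h1 := (hrep1 (mk (t - b)) ⟨t - b, htb, rfl⟩).2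
      have h2 : (t - b) - f t ∈ 𝔭 ^ (k+1) := by
        rw [← Ideal.Quotient.eq, hf, h1]
      have h4 : t - (b + v) ∈ 𝔭 ^ (k+1) := htv
      have h5 : f t - v = ((t - b) - v) - ((t - b) - f t) := by ring
      rw [h5]
      have h6 : (t - b) - v = t - (b + v) := by ring
      rw [h6]
      exact sub_mem h4 h2
  -- v* : representative of the trivial class
  have h0k : (0 : 𝓞 K) ∈ (𝔭 ^ k : Ideal (𝓞 K)) := zero_mem _
  obtain ⟨vstar, hvstarV, hvstar⟩ := hVcover 0 h0k
  have hvstar' : vstar ∈ (𝔭 ^ (k+1) : Ideal (𝓞 K)) := by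
    have : (0 : 𝓞 K) - vstar = -vstar := by ring
    rw [this] at hvstar
    simpa using (neg_mem hvstar)
  -- upper bound for classes: AUD
  have hupper : ∀ b, cnt 𝔭 (k+1) T b ≤ q1 + 1 := by
    intro b
    have := (isAUD_iff.1 hAUD) b astar
    change cnt 𝔭 (k+1) T b ≤ cnt 𝔭 (k+1) T astar + 1 at this
    omega
  -- lower bound: the class of a₀
  have hlow : ∀ v ∈ V, q1 + 1 ≤ cnt 𝔭 (k+1) T (a₀ + v) := by
    intro v hv
    apply hcon'
    have := (hVmem v hv).1
    simpa using this
  have hsum1 : V.card * (q1 + 1) ≤ cnt 𝔭 k T a₀ := by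
    rw [hpart a₀]
    calc V.card * (q1+1) = ∑ _v ∈ V, (q1+1) := by rw [Finset.sum_const, smul_eq_mul]
    _ ≤ ∑ v ∈ V, cnt 𝔭 (k+1) T (a₀ + v) := Finset.sum_le_sum hlow
  have hsum2 : cnt 𝔭 k T astar ≤ V.card * (q1 + 1) - 1 := by
    rw [hpart astar]
    have hterm : cnt 𝔭 (k+1) T (astar + vstar) = q1 :=
      cnt_congr (show astar + vstar - astar ∈ 𝔭 ^ (k+1) by
        have : astar + vstar - astar = vstar := by ring
        rw [this]; exact hvstar')
    calc ∑ v ∈ V, cnt 𝔭 (k+1) T (astar + v)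
        = cnt 𝔭 (k+1) T (astar + vstar) + ∑ v ∈ V.erase vstar, cnt 𝔭 (k+1) T (astar + v) :=
          (Finset.add_sum_erase _ _ hvstarV).symm
      _ ≤ q1 + (V.card - 1) * (q1 + 1) := by
          rw [hterm]
          gcongr
          calc ∑ v ∈ V.erase vstar, cnt 𝔭 (k+1) T (astar + v)
              ≤ ∑ _v ∈ V.erase vstar, (q1+1) := Finset.sum_le_sum (fun v _ => hupper _)
            _ = (V.card - 1) * (q1+1) := by
                rw [Finset.sum_const, smul_eq_mul, Finset.card_erase_of_mem hvstarV]
      _ ≤ V.card * (q1 + 1) - 1 := by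
          have hVpos : 1 ≤ V.card := Finset.card_pos.2 ⟨vstar, hvstarV⟩
          have h1 : (V.card - 1) * (q1+1) + (q1+1) = V.card * (q1+1) := by
            rw [← Nat.succ_mul, Nat.succ_eq_add_one, Nat.sub_add_cancel hVpos]
          omega
  have hVpos : 0 < V.card := Finset.card_pos.2 ⟨vstar, hvstarV⟩
  have hprod : 0 < V.card * (q1+1) := Nat.mul_pos hVpos (Nat.succ_pos _)
  have := hmin astar
  omega

include hp hp0 in
lemma exists_far (T : Finset (𝓞 K)) : ∃ k0 a, 0 < k0 ∧ cnt 𝔭 k0 T a = 0 := by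
  classical
  rcases T.eq_empty_or_nonempty with rfl | ⟨t₀, ht₀⟩
  · exact ⟨1, 0, one_pos, by simp [cnt]⟩
  · have hnu : ∀ t ∈ T.erase t₀, ∃ m, IsNu 𝔭 (t - t₀) m := by
      intro t ht
      apply exists_isNu hp hp0
      have := Finset.ne_of_mem_erase ht
      intro h
      apply this
      have : t - t₀ = 0 := h
      linear_combination this
    choose m hm using hnu
    set M : ℕ := (T.erase t₀).attach.sup (fun t => m t.1 t.2) with hM
    have hmM : ∀ t (ht : t ∈ T.erase t₀), m t ht ≤ M :=
      fun t ht => Finset.le_sup (f := fun t : {x // x ∈ T.erase t₀} => m t.1 t.2)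
        (Finset.mem_attach _ ⟨t, ht⟩)
    obtain ⟨d, hd1, hd2⟩ := Ideal.exists_mem_pow_notMem_pow_succ 𝔭 hp0 hp.ne_top (M + 1)
    refine ⟨M + 2, t₀ + d, by omega, ?_⟩
    rw [cnt, Finset.card_eq_zero, Finset.filter_eq_empty_iff]
    intro t ht hmem
    by_cases hteq : t = t₀
    · subst hteq
      apply hd2
      have h1 : t - (t + d) = -d := by ring
      rw [h1] at hmem
      simpa using (neg_mem hmem)
    · have ht' : t ∈ T.erase t₀ := Finset.mem_erase.2 ⟨hteq, ht⟩
      apply (hm t ht').not_mem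
      have h1 : t - t₀ = (t - (t₀ + d)) + d := by ring
      rw [h1]
      apply add_mem
      · exact Ideal.pow_le_pow_right (by have := hmM t ht'; omega) hmem
      · exact Ideal.pow_le_pow_right (by have := hmM t ht'; omega) hd1

include hp hp0 in
lemma exists_uniform_min (T : Finset (𝓞 K)) (hAUD : ∀ k, 0 < k → IsAUD (𝔭 ^ k) T) :
    ∃ y, y ∉ T ∧ ∀ k b, cnt 𝔭 k T y ≤ cnt 𝔭 k T b := by
  have step : ∀ KK : ℕ, ∃ a, ∀ k ≤ KK, ∀ b, cnt 𝔭 k T a ≤ cnt 𝔭 k T b := by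
    intro KK
    induction KK with
    | zero =>
      refine ⟨0, fun k hk b => ?_⟩
      interval_cases k
      rw [cnt_zero_level, cnt_zero_level]
    | succ KA ih =>
      obtain ⟨a, ha⟩ := ih
      obtain ⟨a', ha'1, ha'2⟩ := exists_min_subclass hp hp0 KA T
        (hAUD (KA + 1) (by omega)) a (ha KA le_rfl)
      refine ⟨a', fun k hk b => ?_⟩
      rcases Nat.lt_or_ge k (KA + 1) with h | h
      · have h1 : cnt 𝔭 k T a' = cnt 𝔭 k T a :=
          cnt_congr (Ideal.pow_le_pow_right (by omega) ha'1)
        rw [h1]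
        exact ha k (by omega) b
      · have h2 : k = KA + 1 := by omega
        subst h2
        exact ha'2 b
  obtain ⟨k0, a0, hk0, ha0⟩ := exists_far hp hp0 T
  obtain ⟨y, hy⟩ := step k0
  have hy0 : cnt 𝔭 k0 T y = 0 := by
    have := hy k0 le_rfl a0
    omega
  refine ⟨y, ?_, ?_⟩
  · intro hyT
    have := cnt_pos_of_mem (𝔭 := 𝔭) (k := k0) hyT
    omega
  · intro k b
    rcases le_or_gt k k0 with h | h
    · exact hy k h b
    · have h1 : cnt 𝔭 k T y ≤ cnt 𝔭 k0 T y := cnt_anti (by omega)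
      omega

include hp hp0 in
lemma levelwise_of_sum_min (T : Finset (𝓞 K)) (hAUD : ∀ k, 0 < k → IsAUD (𝔭 ^ k) T)
    (x : 𝓞 K) (hx : x ∉ T) {Mx : ℕ} (hMx : IsNu 𝔭 (∏ t ∈ T, (t - x)) Mx)
    (hminimal : ∀ x', x' ∉ T → ∀ M', IsNu 𝔭 (∏ t ∈ T, (t - x')) M' → Mx ≤ M') :
    ∀ k b, cnt 𝔭 k T x ≤ cnt 𝔭 k T b := by
  classical
  obtain ⟨y, hyT, hy⟩ := exists_uniform_min hp hp0 T hAUD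
  have hnux : ∀ t ∈ T, ∃ m, IsNu 𝔭 (t - x) m := by
    intro t ht
    apply exists_isNu hp hp0
    intro h
    have h2 : t = x := by have h3 : t - x = 0 := h; linear_combination h3
    exact hx (h2 ▸ ht)
  have hnuy : ∀ t ∈ T, ∃ m, IsNu 𝔭 (t - y) m := by
    intro t ht
    apply exists_isNu hp hp0
    intro h
    have h2 : t = y := by have h3 : t - y = 0 := h; linear_combination h3
    exact hyT (h2 ▸ ht)
  choose mx hmx using hnux
  choose my hmy using hnuy
  -- product valuations
  have hPx : IsNu 𝔭 (∏ t ∈ T.attach, (t.1 - x)) (∑ t ∈ T.attach, mx t.1 t.2) :=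
    IsNu.prod hp hp0 _ _ _ (fun t _ => hmx t.1 t.2)
  have hPy : IsNu 𝔭 (∏ t ∈ T.attach, (t.1 - y)) (∑ t ∈ T.attach, my t.1 t.2) :=
    IsNu.prod hp hp0 _ _ _ (fun t _ => hmy t.1 t.2)
  rw [Finset.prod_attach T (fun t => t - x)] at hPx
  rw [Finset.prod_attach T (fun t => t - y)] at hPy
  have hMxeq : Mx = ∑ t ∈ T.attach, mx t.1 t.2 := hMx.unique hPx
  have hMxy : Mx ≤ ∑ t ∈ T.attach, my t.1 t.2 := hminimal y hyT _ hPy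
  obtain ⟨k0, a0, hk0pos, ha0⟩ := exists_far hp hp0 T
  set L : ℕ := max (max (T.attach.sup fun t => mx t.1 t.2) (T.attach.sup fun t => my t.1 t.2)) k0
    with hL
  have hLx : ∀ t (ht : t ∈ T), mx t ht ≤ L := fun t ht =>
    le_trans (Finset.le_sup (f := fun t : {z // z ∈ T} => mx t.1 t.2) (Finset.mem_attach _ ⟨t, ht⟩))
      (le_trans (le_max_left _ _) (le_max_left _ _))
  have hLy : ∀ t (ht : t ∈ T), my t ht ≤ L := fun t ht =>
    le_trans (Finset.le_sup (f := fun t : {z // z ∈ T} => my t.1 t.2) (Finset.mem_attach _ ⟨t, ht⟩))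
      (le_trans (le_max_right _ _) (le_max_left _ _))
  have hLk0 : k0 ≤ L := le_max_right _ _
  -- counting identities via attach
  have hsumx : ∑ t ∈ T.attach, mx t.1 t.2 = ∑ k ∈ Finset.Icc 1 L, cnt 𝔭 k T x := by
    have := sum_nu_eq (𝔭 := 𝔭) (T := T) (a := x)
      (m := fun t => if ht : t ∈ T then mx t ht else 0) (M := L)
      (fun t ht => by
        show IsNu 𝔭 (t - x) (if h : t ∈ T then mx t h else 0)
        rw [dif_pos ht]; exact hmx t ht)
      (fun t ht => by
        show (if h : t ∈ T then mx t h else 0) ≤ L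
        rw [dif_pos ht]; exact hLx t ht)
    rw [← this]
    rw [← Finset.sum_attach T (fun t => if ht : t ∈ T then mx t ht else 0)]
    apply Finset.sum_congr rfl
    intro t _
    rw [dif_pos t.2]
  have hsumy : ∑ t ∈ T.attach, my t.1 t.2 = ∑ k ∈ Finset.Icc 1 L, cnt 𝔭 k T y := by
    have := sum_nu_eq (𝔭 := 𝔭) (T := T) (a := y)
      (m := fun t => if ht : t ∈ T then my t ht else 0) (M := L)
      (fun t ht => by
        show IsNu 𝔭 (t - y) (if h : t ∈ T then my t h else 0)
        rw [dif_pos ht]; exact hmy t ht)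
      (fun t ht => by
        show (if h : t ∈ T then my t h else 0) ≤ L
        rw [dif_pos ht]; exact hLy t ht)
    rw [← this]
    rw [← Finset.sum_attach T (fun t => if ht : t ∈ T then my t ht else 0)]
    apply Finset.sum_congr rfl
    intro t _
    rw [dif_pos t.2]
  have htermwise : ∀ k ∈ Finset.Icc 1 L, cnt 𝔭 k T y ≤ cnt 𝔭 k T x := fun k _ => hy k x
  have hsums : ∑ k ∈ Finset.Icc 1 L, cnt 𝔭 k T x ≤ ∑ k ∈ Finset.Icc 1 L, cnt 𝔭 k T y := by
    rw [← hsumx, ← hsumy, ← hMxeq]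
    exact hMxy
  have heq : ∀ k ∈ Finset.Icc 1 L, cnt 𝔭 k T x = cnt 𝔭 k T y := by
    intro k hk
    by_contra hne
    have hlt : cnt 𝔭 k T y < cnt 𝔭 k T x := lt_of_le_of_ne (htermwise k hk) (fun h => hne h.symm)
    have hstrict : ∑ k ∈ Finset.Icc 1 L, cnt 𝔭 k T y < ∑ k ∈ Finset.Icc 1 L, cnt 𝔭 k T x :=
      Finset.sum_lt_sum htermwise ⟨k, hk, hlt⟩
    omega
  intro k b
  rcases Nat.eq_zero_or_pos k with rfl | hkpos
  · rw [cnt_zero_level, cnt_zero_level]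
  · rcases le_or_gt k L with h | h
    · rw [heq k (Finset.mem_Icc.2 ⟨hkpos, h⟩)]
      exact hy k b
    · have h1 : cnt 𝔭 k T x ≤ cnt 𝔭 k0 T x := cnt_anti (by omega)
      have h2 : cnt 𝔭 k0 T x = cnt 𝔭 k0 T y := heq k0 (Finset.mem_Icc.2 ⟨hk0pos, hLk0⟩)
      have h3 := hy k0 a0
      omega

lemma aud_insert {T : Finset (𝓞 K)} (hAUD : ∀ k, 0 < k → IsAUD (𝔭 ^ k) T)
    {x : 𝓞 K} (hx : x ∉ T) (hlev : ∀ k b, cnt 𝔭 k T x ≤ cnt 𝔭 k T b) :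
    ∀ k, 0 < k → IsAUD (𝔭 ^ k) (insert x T) := by
  intro k hk
  rw [isAUD_iff]
  intro a b
  change cnt 𝔭 k (insert x T) a ≤ cnt 𝔭 k (insert x T) b + 1
  rw [cnt_insert hx, cnt_insert hx]
  have hold : cnt 𝔭 k T a ≤ cnt 𝔭 k T b + 1 := isAUD_iff.1 (hAUD k hk) a b
  by_cases hxa : x - a ∈ 𝔭 ^ k
  · have h1 : cnt 𝔭 k T x = cnt 𝔭 k T a := cnt_congr hxa
    have h2 := hlev k b
    rw [if_pos hxa]
    split_ifs <;> omega
  · rw [if_neg hxa]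
    split_ifs <;> omega

lemma prod_sub_swap_mem {T : Finset (𝓞 K)} {s : 𝓞 K} {c : ℕ} :
    (∏ t ∈ T, (s - t)) ∈ 𝔭 ^ c ↔ (∏ t ∈ T, (t - s)) ∈ 𝔭 ^ c := by
  have h : ∏ t ∈ T, (s - t) = (-1 : 𝓞 K) ^ T.card * ∏ t ∈ T, (t - s) := by
    rw [← Finset.prod_const, ← Finset.prod_mul_distrib]
    exact Finset.prod_congr rfl (fun t _ => by ring)
  have hsq : ((-1 : 𝓞 K) ^ T.card) * ((-1 : 𝓞 K) ^ T.card) = 1 := by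
    rw [← pow_add]
    exact Even.neg_one_pow ⟨T.card, rfl⟩
  rw [h]
  constructor
  · intro hmem
    have h2 := Ideal.mul_mem_left _ ((-1 : 𝓞 K) ^ T.card) hmem
    rwa [← mul_assoc, hsq, one_mul] at h2
  · exact fun hmem => Ideal.mul_mem_left _ _ hmem

include hp hp0 in
lemma no_universal (n : ℕ) (S : Finset (𝓞 K))
    (hU : ∀ P : Polynomial K, P.natDegree ≤ n →
      (∀ s ∈ S, ∃ b : 𝓞 K, Polynomial.eval (algebraMap (𝓞 K) K s) P = algebraMap (𝓞 K) K b) →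
      (∀ a : 𝓞 K, ∃ b : 𝓞 K, Polynomial.eval (algebraMap (𝓞 K) K a) P = algebraMap (𝓞 K) K b))
    (T : Finset (𝓞 K)) (hcard : T.card ≤ n) (c : ℕ)
    (hS : ∀ s ∈ S, s ∉ T → (∏ t ∈ T, (s - t)) ∈ 𝔭 ^ c)
    (x₀ : 𝓞 K) (hx₀ : (∏ t ∈ T, (x₀ - t)) ∉ 𝔭 ^ c) : False := by
  classical
  obtain ⟨u, w, hu0, hw0, huw⟩ := exists_uw hp hp0 c
  set φ : 𝓞 K →+* K := algebraMap (𝓞 K) K with hφ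
  have hinj : Function.Injective φ := IsFractionRing.injective (𝓞 K) K
  have hφu : φ u ≠ 0 := fun h => hu0 (hinj (by rw [h, map_zero]))
  set P : Polynomial K :=
    Polynomial.C (φ w / φ u) * ∏ t ∈ T, (Polynomial.X - Polynomial.C (φ t)) with hP
  have hdeg : P.natDegree ≤ n := by
    calc P.natDegree ≤ (Polynomial.C (φ w / φ u)).natDegree +
        (∏ t ∈ T, (Polynomial.X - Polynomial.C (φ t))).natDegree := Polynomial.natDegree_mul_le
      _ ≤ 0 + ∑ t ∈ T, (Polynomial.X - Polynomial.C (φ t)).natDegree := by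
          rw [Polynomial.natDegree_C]
          exact Nat.add_le_add le_rfl (Polynomial.natDegree_prod_le _ _)
      _ ≤ T.card := by
          rw [zero_add]
          have h1 : ∑ t ∈ T, (Polynomial.X - Polynomial.C (φ t)).natDegree = T.card := by
            rw [Finset.sum_congr rfl (fun t _ => Polynomial.natDegree_X_sub_C (φ t)),
              Finset.sum_const, smul_eq_mul, mul_one]
          omega
      _ ≤ n := hcard
  have heval : ∀ y : 𝓞 K, P.eval (φ y) = (φ w / φ u) * φ (∏ t ∈ T, (y - t)) := by
    intro y
    rw [hP, Polynomial.eval_mul, Polynomial.eval_C, Polynomial.eval_prod, map_prod]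
    congr 1
    exact Finset.prod_congr rfl (fun t _ => by
      rw [Polynomial.eval_sub, Polynomial.eval_X, Polynomial.eval_C, map_sub])
  have hkey : ∀ y : 𝓞 K, (∃ b, P.eval (φ y) = φ b) ↔ u ∣ w * ∏ t ∈ T, (y - t) := by
    intro y
    rw [heval]
    constructor
    · rintro ⟨b, hb⟩
      refine ⟨b, hinj ?_⟩
      rw [map_mul, map_mul]
      rw [div_mul_eq_mul_div, div_eq_iff hφu] at hb
      rw [hb]
      ring
    · rintro ⟨b, hb⟩
      refine ⟨b, ?_⟩
      rw [div_mul_eq_mul_div, div_eq_iff hφu, ← map_mul, ← map_mul]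
      congr 1
      rw [hb]
      ring
  have hSP : ∀ s ∈ S, ∃ b, P.eval (φ s) = φ b := by
    intro s hs
    by_cases hsT : s ∈ T
    · refine ⟨0, ?_⟩
      rw [heval, map_zero]
      have h0 : (∏ t ∈ T, (s - t)) = 0 := Finset.prod_eq_zero hsT (by ring)
      rw [h0, map_zero, mul_zero]
    · exact (hkey s).2 ((huw _).2 (hS s hs hsT))
  have hfin := hU P hdeg hSP x₀
  exact hx₀ ((huw _).1 ((hkey x₀).1 hfin))

include hp hp0 in
lemma forward_per_prime (n : ℕ) (S : Finset (𝓞 K))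
    (hU : ∀ P : Polynomial K, P.natDegree ≤ n →
      (∀ s ∈ S, ∃ b : 𝓞 K, Polynomial.eval (algebraMap (𝓞 K) K s) P = algebraMap (𝓞 K) K b) →
      (∀ a : 𝓞 K, ∃ b : 𝓞 K, Polynomial.eval (algebraMap (𝓞 K) K a) P = algebraMap (𝓞 K) K b)) :
    ∃ S' ⊆ S, S'.card = n + 1 ∧ ∀ k : ℕ, 0 < k → IsAUD (𝔭 ^ k) S' := by
  classical
  suffices h : ∀ l, l ≤ n + 1 → ∃ T, T ⊆ S ∧ T.card = l ∧ ∀ k, 0 < k → IsAUD (𝔭 ^ k) T by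
    obtain ⟨T, h1, h2, h3⟩ := h (n+1) le_rfl
    exact ⟨T, h1, h2, h3⟩
  intro l
  induction l with
  | zero =>
    intro _
    refine ⟨∅, Finset.empty_subset _, Finset.card_empty, fun k hk a b => ?_⟩
    simp [Finset.filter_empty]
  | succ l ih =>
    intro hl
    obtain ⟨T, hTS, hTcard, hTaud⟩ := ih (by omega)
    have hprodnu : ∀ x : 𝓞 K, x ∉ T → ∃ m, IsNu 𝔭 (∏ t ∈ T, (t - x)) m := by
      intro x hx
      apply exists_isNu hp hp0
      rw [Finset.prod_ne_zero_iff]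
      intro t ht h0
      have h2 : t = x := by have h3 : t - x = 0 := h0; linear_combination h3
      exact hx (h2 ▸ ht)
    have hSne : {m : ℕ | ∃ x, x ∉ T ∧ IsNu 𝔭 (∏ t ∈ T, (t - x)) m}.Nonempty := by
      obtain ⟨x, hx⟩ := Infinite.exists_notMem_finset T
      obtain ⟨m, hm⟩ := hprodnu x hx
      exact ⟨m, x, hx, hm⟩
    set Mmin := sInf {m : ℕ | ∃ x, x ∉ T ∧ IsNu 𝔭 (∏ t ∈ T, (t - x)) m} with hMmin
    obtain ⟨xbar, hxbarT, hxbarNu⟩ := Nat.sInf_mem hSne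
    have hMminle : ∀ x, x ∉ T → ∀ m, IsNu 𝔭 (∏ t ∈ T, (t - x)) m → Mmin ≤ m := by
      intro x hx m hm
      exact Nat.sInf_le ⟨x, hx, hm⟩
    -- there exists t* ∈ S \ T achieving the minimum
    have hstar : ∃ ts ∈ S, ts ∉ T ∧ IsNu 𝔭 (∏ t ∈ T, (t - ts)) Mmin := by
      by_contra hcon
      push_neg at hcon
      apply no_universal hp hp0 n S hU T (by omega) (Mmin + 1) ?_ xbar ?_
      · intro s hs hsT
        rw [prod_sub_swap_mem]
        obtain ⟨m, hm⟩ := hprodnu s hsT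
        have h1 : Mmin ≤ m := hMminle s hsT m hm
        have h2 : m ≠ Mmin := fun h => hcon s hs hsT (h ▸ hm)
        exact (hm (Mmin + 1)).2 (by omega)
      · rw [prod_sub_swap_mem]
        exact hxbarNu.not_mem
    obtain ⟨ts, htsS, htsT, htsNu⟩ := hstar
    have hlev : ∀ k b, cnt 𝔭 k T ts ≤ cnt 𝔭 k T b :=
      levelwise_of_sum_min hp hp0 T hTaud ts htsT htsNu hMminle
    refine ⟨insert ts T, Finset.insert_subset htsS hTS, ?_, aud_insert hTaud htsT hlev⟩
    rw [Finset.card_insert_of_notMem htsT, hTcard]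

lemma IsNu.neg {z : 𝓞 K} {m : ℕ} (h : IsNu 𝔭 z m) : IsNu 𝔭 (-z) m := by
  intro k
  rw [← h k]
  exact ⟨fun hm => by simpa using (neg_mem hm), fun hm => neg_mem hm⟩

lemma isNu_sub_swap {x y : 𝓞 K} {m : ℕ} (h : IsNu 𝔭 (x - y) m) : IsNu 𝔭 (y - x) m := by
  have := h.neg
  rwa [neg_sub] at this

end

section
variable {K : Type*} [Field K] [NumberField K]

lemma dvd_of_forall_prime_pow {q p : 𝓞 K} (hq : q ≠ 0)
    (h : ∀ 𝔭 : Ideal (𝓞 K), 𝔭.IsPrime → 𝔭 ≠ ⊥ → ∀ c : ℕ, q ∈ 𝔭 ^ c → p ∈ 𝔭 ^ c) :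
    q ∣ p := by
  classical
  rcases eq_or_ne p 0 with rfl | hp0
  · exact dvd_zero q
  have hQ0 : Ideal.span {q} ≠ (0 : Ideal (𝓞 K)) := by
    rw [Ne, Ideal.zero_eq_bot, Ideal.span_singleton_eq_bot]; exact hq
  have hP0 : Ideal.span {p} ≠ (0 : Ideal (𝓞 K)) := by
    rw [Ne, Ideal.zero_eq_bot, Ideal.span_singleton_eq_bot]; exact hp0
  have hdvd : Ideal.span {q} ∣ Ideal.span {p} := by
    rw [UniqueFactorizationMonoid.dvd_iff_normalizedFactors_le_normalizedFactors hQ0 hP0]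
    rw [Multiset.le_iff_count]
    intro J
    by_cases hJ : J ∈ UniqueFactorizationMonoid.normalizedFactors (Ideal.span {q})
    · have hJprime : Prime J := UniqueFactorizationMonoid.prime_of_normalized_factor J hJ
      have hJ0 : J ≠ ⊥ := hJprime.ne_zero
      haveI hJp : J.IsPrime := (Ideal.prime_iff_isPrime hJ0).1 hJprime
      obtain ⟨kq, hkq⟩ := exists_isNu hJp hJ0 hq
      obtain ⟨kp, hkp⟩ := exists_isNu hJp hJ0 hp0
      have hle : kq ≤ kp := (hkp kq).1 (h J hJp hJ0 kq hkq.mem)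
      have hcq : (UniqueFactorizationMonoid.normalizedFactors (Ideal.span {q})).count J = kq := by
        apply Ideal.count_normalizedFactors_eq
        · rw [Ideal.span_singleton_le_iff_mem]; exact hkq.mem
        · rw [Ideal.span_singleton_le_iff_mem]; exact hkq.not_mem
      have hcp : (UniqueFactorizationMonoid.normalizedFactors (Ideal.span {p})).count J = kp := by
        apply Ideal.count_normalizedFactors_eq
        · rw [Ideal.span_singleton_le_iff_mem]; exact hkp.mem
        · rw [Ideal.span_singleton_le_iff_mem]; exact hkp.not_mem
      rw [hcq, hcp]
      exact hle
    · rw [Multiset.count_eq_zero_of_notMem hJ]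
      exact Nat.zero_le _
  have := Ideal.le_of_dvd hdvd
  rw [← Ideal.span_singleton_le_span_singleton]
  exact this
end

section
variable {K : Type*} [Field K] [NumberField K]

lemma backward (n : ℕ) (S : Finset (𝓞 K))
    (hex : ∀ 𝔭 : Ideal (𝓞 K), 𝔭.IsPrime → 𝔭 ≠ ⊥ →
      ∃ S' ⊆ S, S'.card = n + 1 ∧ ∀ k : ℕ, 0 < k → IsAUD (𝔭 ^ k) S')
    (P : Polynomial K) (hdeg : P.natDegree ≤ n)
    (hS : ∀ s ∈ S, ∃ b : 𝓞 K, P.eval (algebraMap (𝓞 K) K s) = algebraMap (𝓞 K) K b)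
    (a : 𝓞 K) : ∃ b : 𝓞 K, P.eval (algebraMap (𝓞 K) K a) = algebraMap (𝓞 K) K b := by
  classical
  by_cases haS : a ∈ S
  · exact hS a haS
  set φ : 𝓞 K →+* K := algebraMap (𝓞 K) K with hφ
  have hinj : Function.Injective φ := IsFractionRing.injective (𝓞 K) K
  set z := P.eval (φ a) with hzdef
  obtain ⟨⟨p, q0⟩, hpq⟩ := IsLocalization.surj (nonZeroDivisors (𝓞 K)) z
  set q : 𝓞 K := (q0 : 𝓞 K) with hqdef
  have hq : q ≠ 0 := nonZeroDivisors.coe_ne_zero q0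
  have hφq : φ q ≠ 0 := fun h => hq (hinj (by rw [h, map_zero]))
  have hz : z * φ q = φ p := hpq
  suffices hqp : q ∣ p by
    obtain ⟨b, rfl⟩ := hqp
    refine ⟨b, ?_⟩
    rw [map_mul] at hpq
    have h2 : z * φ q = φ b * φ q := by rw [hpq]; ring
    exact mul_right_cancel₀ hφq h2
  apply dvd_of_forall_prime_pow hq
  intro 𝔭 hp hp0 c hqc
  obtain ⟨S', hS'S, hS'card, hS'aud⟩ := hex 𝔭 hp hp0
  have haS' : a ∉ S' := fun h => haS (hS'S h)
  -- Lagrange interpolation data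
  have hinjS : Set.InjOn (fun t : 𝓞 K => φ t) S' := fun x _ y _ h => hinj h
  have hdeglt : P.degree < (S'.card : WithBot ℕ) := by
    rw [hS'card]
    apply lt_of_le_of_lt Polynomial.degree_le_natDegree
    exact_mod_cast Nat.lt_succ_of_le hdeg
  have hinterp := Lagrange.eq_interpolate (s := S') (v := fun t : 𝓞 K => φ t) hinjS hdeglt
  -- numerators and denominators
  set d : 𝓞 K → 𝓞 K := fun s => ∏ t ∈ S'.erase s, (s - t) with hd
  set nn : 𝓞 K → 𝓞 K := fun s => ∏ t ∈ S'.erase s, (a - t) with hnn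
  have hd0 : ∀ s ∈ S', d s ≠ 0 := by
    intro s hs
    rw [hd, Finset.prod_ne_zero_iff]
    intro t ht h0
    have h2 : s = t := by have h3 : s - t = 0 := h0; linear_combination h3
    exact (Finset.ne_of_mem_erase ht) h2.symm
  have hφd : ∀ s : 𝓞 K, φ (d s) = ∏ t ∈ S'.erase s, (φ s - φ t) := by
    intro s
    rw [hd, map_prod]
    exact Finset.prod_congr rfl (fun t _ => by rw [map_sub])
  have hφn : ∀ s : 𝓞 K, φ (nn s) = ∏ t ∈ S'.erase s, (φ a - φ t) := by
    intro s
    rw [hnn, map_prod]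
    exact Finset.prod_congr rfl (fun t _ => by rw [map_sub])
  -- the interpolation formula for z
  have hz2 : z = ∑ s ∈ S', P.eval (φ s) * (φ (nn s) * (φ (d s))⁻¹) := by
    conv_lhs => rw [hzdef, hinterp]
    rw [Lagrange.interpolate_apply, Polynomial.eval_finset_sum]
    apply Finset.sum_congr rfl
    intro s hs
    rw [Polynomial.eval_mul, Polynomial.eval_C]
    congr 1
    rw [Lagrange.basis, Polynomial.eval_prod]
    have heq1 : ∀ t ∈ S'.erase s,
        Polynomial.eval (φ a) (Lagrange.basisDivisor (φ s) (φ t))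
          = (φ s - φ t)⁻¹ * (φ a - φ t) := by
      intro t ht
      rw [Lagrange.basisDivisor, Polynomial.eval_mul, Polynomial.eval_C,
        Polynomial.eval_sub, Polynomial.eval_X, Polynomial.eval_C]
    rw [Finset.prod_congr rfl heq1, Finset.prod_mul_distrib, hφn, hφd,
      ← Finset.prod_inv_distrib]
    ring
  -- integral values of P on S'
  set bF : 𝓞 K → 𝓞 K := fun s =>
    if h : ∃ b : 𝓞 K, P.eval (φ s) = φ b then h.choose else 0 with hbF
  have hbFspec : ∀ s ∈ S', P.eval (φ s) = φ (bF s) := by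
    intro s hs
    have h := hS s (hS'S hs)
    rw [hbF]
    simp only [dif_pos h]
    exact h.choose_spec
  -- valuations of the factors
  set nuA : 𝓞 K → ℕ := fun t => if h : ∃ m, IsNu 𝔭 (t - a) m then h.choose else 0 with hnuA
  have hnuAspec : ∀ t ∈ S', IsNu 𝔭 (t - a) (nuA t) := by
    intro t ht
    have hta : t - a ≠ 0 := by
      intro h0
      have h2 : t = a := by linear_combination h0
      exact haS' (h2 ▸ ht)
    have h := exists_isNu hp hp0 hta
    rw [hnuA]
    simp only [dif_pos h]
    exact h.choose_spec
  set nuS : 𝓞 K → 𝓞 K → ℕ := fun s t => if h : ∃ m, IsNu 𝔭 (t - s) m then h.choose else 0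
    with hnuS
  have hnuSspec : ∀ s ∈ S', ∀ t ∈ S'.erase s, IsNu 𝔭 (t - s) (nuS s t) := by
    intro s hs t ht
    have hts : t - s ≠ 0 := by
      intro h0
      have h2 : t = s := by linear_combination h0
      exact (Finset.ne_of_mem_erase ht) h2
    have h := exists_isNu hp hp0 hts
    rw [hnuS]
    simp only [dif_pos h]
    exact h.choose_spec
  set md : 𝓞 K → ℕ := fun s => ∑ t ∈ S'.erase s, nuS s t with hmd
  have hdnu : ∀ s ∈ S', IsNu 𝔭 (d s) (md s) := by
    intro s hs
    rw [hd, hmd]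
    exact IsNu.prod hp hp0 _ _ _ (fun t ht => isNu_sub_swap (hnuSspec s hs t ht))
  have hnnu : ∀ s ∈ S', IsNu 𝔭 (nn s) (∑ t ∈ S'.erase s, nuA t) := by
    intro s hs
    rw [hnn]
    exact IsNu.prod hp hp0 _ _ _ (fun t ht =>
      isNu_sub_swap (hnuAspec t (Finset.mem_of_mem_erase ht)))
  -- the key inequality from almost uniform distribution
  have hkey : ∀ s ∈ S', nn s ∈ 𝔭 ^ (md s) := by
    intro s hs
    have hle : md s ≤ ∑ t ∈ S'.erase s, nuA t := by
      rw [hmd]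
      exact key_ineq hS'aud hs
        (fun t ht => hnuAspec t (Finset.mem_of_mem_erase ht))
        (fun t ht => hnuSspec s hs t ht)
    exact ((hnnu s hs) (md s)).2 hle
  -- global denominators
  set D : 𝓞 K := ∏ s ∈ S', d s with hD
  set Dd : 𝓞 K → 𝓞 K := fun s => ∏ s' ∈ S'.erase s, d s' with hDd
  have hDs : ∀ s ∈ S', D = d s * Dd s := by
    intro s hs
    rw [hD, hDd, Finset.mul_prod_erase S' d hs]
  set A : 𝓞 K := ∑ s ∈ S', bF s * q * nn s * Dd s with hA
  -- the master identity
  have hmaster : p * D = A := by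
    apply hinj
    rw [map_mul, ← hz, hz2, hA, map_sum, Finset.sum_mul, Finset.sum_mul]
    apply Finset.sum_congr rfl
    intro s hs
    rw [hbFspec s hs]
    have hφds : φ (d s) ≠ 0 := fun h => hd0 s hs (hinj (by rw [h, map_zero]))
    rw [hDs s hs]
    rw [map_mul, map_mul, map_mul, map_mul]
    field_simp
  -- conclude p ∈ 𝔭 ^ c
  have hDnu : IsNu 𝔭 D (∑ s ∈ S', md s) := by
    rw [hD]
    exact IsNu.prod hp hp0 _ _ _ hdnu
  have hAmem : A ∈ 𝔭 ^ (c + ∑ s ∈ S', md s) := by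
    rw [hA]
    apply Ideal.sum_mem
    intro s hs
    have h1 : nn s * Dd s ∈ 𝔭 ^ (∑ s' ∈ S', md s') := by
      have h2 : Dd s ∈ 𝔭 ^ (∑ s' ∈ S'.erase s, md s') := by
        have := IsNu.prod hp hp0 (S'.erase s) d md
          (fun t ht => hdnu t (Finset.mem_of_mem_erase ht))
        exact this.mem
      have h3 := Ideal.mul_mem_mul (hkey s hs) h2
      rw [← pow_add] at h3
      rwa [Finset.add_sum_erase S' md hs] at h3
    have h4 := Ideal.mul_mem_mul hqc h1
    rw [← pow_add] at h4
    have h5 : bF s * q * nn s * Dd s = bF s * (q * (nn s * Dd s)) := by ring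
    rw [h5]
    exact Ideal.mul_mem_left _ _ h4
  rcases eq_or_ne p 0 with rfl | hp0'
  · exact zero_mem _
  obtain ⟨mp, hmp⟩ := exists_isNu hp hp0 hp0'
  have hD0 : D ≠ 0 := hDnu.ne_zero
  have hpD : IsNu 𝔭 (p * D) (mp + ∑ s ∈ S', md s) := hmp.mul hp hp0 hDnu
  rw [hmaster] at hpD
  have hle : c + ∑ s ∈ S', md s ≤ mp + ∑ s ∈ S', md s := (hpD _).1 hAmem
  exact (hmp c).2 (by omega)
end

/-- Let `K` be a number field with ring of integers `𝓞 K`. A finite subset `S` of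
`𝓞 K` is `n`-universal if and only if for every non-zero prime ideal `𝔭` of `𝓞 K`
there exists a subset `S' ⊆ S` with `n + 1` elements which is almost uniformly
distributed modulo `𝔭 ^ k` for every positive integer `k`. -/
theorem stmt5 {K : Type*} [Field K] [NumberField K] (n : ℕ) (S : Finset (𝓞 K)) :
    IsNUniversal (𝓞 K) K n S ↔
      ∀ 𝔭 : Ideal (𝓞 K), 𝔭.IsPrime → 𝔭 ≠ ⊥ →
        ∃ S' ⊆ S, S'.card = n + 1 ∧ ∀ k : ℕ, 0 < k → IsAUD (𝔭 ^ k) S' := by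
  constructor
  · intro hU 𝔭 hp hp0
    apply forward_per_prime hp hp0 n S
    intro P hdeg hPS
    exact (hU P hdeg).2 hPS
  · intro hex P hdeg
    constructor
    · intro h s _
      exact h s
    · intro hPS a
      exact backward n S hex P hdeg hPS a
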